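/- Let $d \ge 1$ and $0 \le t \le d$ be integers, and let $\varepsilon \in \{+1, -1\}$. Then $\sum_{k+m+n = d-t,\ k,m,n \ge 0} \varepsilon^n \dfrac{v^{t^2 - 2dt + t + 2nt + \binom{n+1}{2} - 2km - 2m}}{[n]!\,[2k]^{!!}\,[2m]^{!!}} = \dfrac{v^{(1-d)t}}{[d-t]!} \prod_{j=t+1}^{d} (v^{-j} + \varepsilon\, v^{j})$ holds in $\mathbb{Q}(v)$. -/

import Mathlib

noncomputable section

abbrev K : Type := RatFunc ℚ

/-- The indeterminate `v` in `ℚ(v)`. -/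
def v : K := RatFunc.X

/-- Quantum integer `[m] = (v^m - v^{-m})/(v - v^{-1})`. -/
def qint (m : ℤ) : K := (v ^ m - v ^ (-m)) / (v - v⁻¹)

/-- Quantum factorial `[r]! = ∏_{i=1}^r [i]`. -/
def qfact (r : ℕ) : K := ∏ i ∈ Finset.range r, qint ((i : ℤ) + 1)

/-- Quantum double factorial `[2r]!! = ∏_{i=1}^r [2i]`. -/
def qdfact (r : ℕ) : K := ∏ i ∈ Finset.range r, qint (2 * ((i : ℤ) + 1))

/-- Balanced Gaussian binomial coefficient `[m][m-1]⋯[m-r+1]/[r]!`. -/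
def qbinom (m : ℤ) (r : ℕ) : K := (∏ i ∈ Finset.range r, qint (m - (i : ℤ))) / qfact r

/-- Gaussian binomial with integer lower index, vanishing for negative lower index. -/
def qbinomZ (m r : ℤ) : K := if 0 ≤ r then qbinom m r.toNat else 0

lemma hv : v ≠ 0 := RatFunc.X_ne_zero

lemma hbn (n : ℕ) (hn : 0 < n) : v ^ (n : ℤ) - v ^ (-(n : ℤ)) ≠ 0 := by
  intro h
  have h1 : v ^ (n : ℤ) = v ^ (-(n : ℤ)) := sub_eq_zero.mp h
  have h2 : v ^ (n : ℤ) * v ^ (n : ℤ) = 1 := by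
    nth_rewrite 1 [h1]
    rw [← zpow_add₀ hv, neg_add_cancel, zpow_zero]
  have h3 : v ^ (2 * n) = 1 := by
    have e : v ^ ((n : ℤ)) * v ^ ((n : ℤ)) = v ^ (2 * n : ℕ) := by
      rw [← zpow_add₀ hv, ← zpow_natCast]; norm_num; ring_nf
    rw [e] at h2; exact h2
  have h4 : (Polynomial.X : Polynomial ℚ) ^ (2 * n) = 1 := by
    apply IsFractionRing.injective (Polynomial ℚ) K
    rw [map_pow, map_one, RatFunc.algebraMap_X]; exact h3
  have := congrArg Polynomial.natDegree h4
  simp [Polynomial.natDegree_X_pow] at this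
  omega

lemma hbz (m : ℤ) (hm : m ≠ 0) : v ^ m - v ^ (-m) ≠ 0 := by
  rcases lt_or_gt_of_ne hm with h | h
  · have h1 := hbn (-m).toNat (by omega)
    have e1 : ((-m).toNat : ℤ) = -m := by omega
    rw [e1, neg_neg] at h1
    intro h2; apply h1
    have : v ^ (-m) - v ^ m = -(v ^ m - v ^ (-m)) := by ring
    rw [this, h2, neg_zero]
  · have h1 := hbn m.toNat (by omega)
    have e1 : ((m).toNat : ℤ) = m := by omega
    rwa [e1] at h1

lemma hb1 : v - v⁻¹ ≠ 0 := by
  have := hbz 1 one_ne_zero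
  simpa [zpow_one, zpow_neg] using this

lemma qint_ne_zero (m : ℤ) (hm : m ≠ 0) : qint m ≠ 0 :=
  div_ne_zero (hbz m hm) hb1

lemma qfact_ne_zero (r : ℕ) : qfact r ≠ 0 := by
  apply Finset.prod_ne_zero_iff.mpr
  intro i _; exact qint_ne_zero _ (by omega)

lemma qdfact_ne_zero (r : ℕ) : qdfact r ≠ 0 := by
  apply Finset.prod_ne_zero_iff.mpr
  intro i _; exact qint_ne_zero _ (by omega)

lemma qadd (a b : ℤ) : qint (a + b) = v ^ b * qint a + v ^ (-a) * qint b := by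
  unfold qint
  rw [← mul_div_assoc, ← mul_div_assoc, ← add_div]
  congr 1
  have e1 : v ^ (a + b) = v ^ a * v ^ b := zpow_add₀ hv a b
  have e2 : v ^ (-(a + b)) = v ^ (-a) * v ^ (-b) := by
    rw [← zpow_add₀ hv]; ring_nf
  rw [e1, e2]; ring

lemma qdouble (n : ℤ) : qint (2 * n) = (v ^ n + v ^ (-n)) * qint n := by
  unfold qint
  rw [← mul_div_assoc]
  congr 1
  have e1 : v ^ (2 * n) = v ^ n * v ^ n := by rw [← zpow_add₀ hv]; ring_nf
  have e2 : v ^ (-(2 * n)) = v ^ (-n) * v ^ (-n) := by rw [← zpow_add₀ hv]; ring_nf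
  rw [e1, e2]; ring

lemma qfact_succ (r : ℕ) : qfact (r + 1) = qfact r * qint ((r : ℤ) + 1) :=
  Finset.prod_range_succ _ r

lemma qdfact_succ (r : ℕ) : qdfact (r + 1) = qdfact r * qint (2 * ((r : ℤ) + 1)) :=
  Finset.prod_range_succ _ r


lemma qint_zero : qint 0 = 0 := by simp [qint]

/-- term of the double-factorial sum -/
def sa (r k : ℕ) : K :=
  v ^ (-2*(k:ℤ)*((r:ℤ)-(k:ℤ)) - 2*((r:ℤ)-(k:ℤ))) / (qdfact k * qdfact (r-k))

def SA (r : ℕ) : K := ∑ k ∈ Finset.range (r+1), sa r k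

lemma SA_rec (r : ℕ) :
    qint (2*((r:ℤ)+1)) * SA (r+1) = (1 + v^(-(2*((r:ℤ)+1)))) * SA r := by
  have hsplit : ∀ k ∈ Finset.range (r+2),
      qint (2*((r:ℤ)+1)) * sa (r+1) k
      = (v ^ (-2*(k:ℤ)*((r:ℤ)+1-(k:ℤ)) - 2*((r:ℤ)+1-(k:ℤ)) + 2*((r:ℤ)+1-(k:ℤ)))
            * qint (2*(k:ℤ)) / (qdfact k * qdfact (r+1-k)))
        + (v ^ (-2*(k:ℤ)*((r:ℤ)+1-(k:ℤ)) - 2*((r:ℤ)+1-(k:ℤ)) - 2*(k:ℤ))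
            * qint (2*((r:ℤ)+1-(k:ℤ))) / (qdfact k * qdfact (r+1-k))) := by
    intro k hk
    have hq : qint (2*((r:ℤ)+1)) = v ^ (2*((r:ℤ)+1-(k:ℤ))) * qint (2*(k:ℤ))
        + v ^ (-(2*(k:ℤ))) * qint (2*((r:ℤ)+1-(k:ℤ))) := by
      have := qadd (2*(k:ℤ)) (2*((r:ℤ)+1-(k:ℤ)))
      rw [show 2*(k:ℤ) + 2*((r:ℤ)+1-(k:ℤ)) = 2*((r:ℤ)+1) by ring] at this
      exact this
    rw [hq, sa]
    rw [show (-2*(k:ℤ)*((r:ℤ)+1-(k:ℤ)) - 2*((r:ℤ)+1-(k:ℤ)) + 2*((r:ℤ)+1-(k:ℤ)))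
        = (-2*(k:ℤ)*(((r+1):ℕ)-(k:ℤ)) - 2*(((r+1):ℕ)-(k:ℤ))) + 2*((r:ℤ)+1-(k:ℤ)) by push_cast; ring]
    rw [show (-2*(k:ℤ)*((r:ℤ)+1-(k:ℤ)) - 2*((r:ℤ)+1-(k:ℤ)) - 2*(k:ℤ))
        = (-2*(k:ℤ)*(((r+1):ℕ)-(k:ℤ)) - 2*(((r+1):ℕ)-(k:ℤ))) + (-(2*(k:ℤ))) by push_cast; ring]
    rw [zpow_add₀ hv, zpow_add₀ hv]
    ring
  rw [SA, Finset.mul_sum, Finset.sum_congr rfl hsplit, Finset.sum_add_distrib]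
  have hP : (∑ k ∈ Finset.range (r+2),
      v ^ (-2*(k:ℤ)*((r:ℤ)+1-(k:ℤ)) - 2*((r:ℤ)+1-(k:ℤ)) + 2*((r:ℤ)+1-(k:ℤ)))
        * qint (2*(k:ℤ)) / (qdfact k * qdfact (r+1-k))) = SA r := by
    rw [Finset.sum_range_succ']
    simp only [Nat.cast_zero, mul_zero, zero_mul, qint_zero, mul_zero, zero_div, add_zero]
    rw [SA]
    apply Finset.sum_congr rfl
    intro k hk
    have hk' : k ≤ r := by simpa [Nat.lt_succ_iff] using hk
    have h1 : r + 1 - (k+1) = r - k := by omega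
    have h2 : qdfact (k+1) = qdfact k * qint (2*((k:ℤ)+1)) := qdfact_succ k
    have hqne := qint_ne_zero (2*((k:ℤ)+1)) (by omega)
    rw [h1, h2, sa]
    rw [show (2*((k+1:ℕ):ℤ)) = 2*((k:ℤ)+1) by push_cast; ring]
    rw [show (-2*((k+1:ℕ):ℤ)*((r:ℤ)+1-((k+1:ℕ):ℤ)) - 2*((r:ℤ)+1-((k+1:ℕ):ℤ)) + 2*((r:ℤ)+1-((k+1:ℕ):ℤ)))
        = -2*(k:ℤ)*((r:ℤ)-(k:ℤ)) - 2*((r:ℤ)-(k:ℤ)) by push_cast; ring]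
    have hd1 := qdfact_ne_zero k
    have hd2 := qdfact_ne_zero (r-k)
    field_simp
  have hQ : (∑ k ∈ Finset.range (r+2),
      v ^ (-2*(k:ℤ)*((r:ℤ)+1-(k:ℤ)) - 2*((r:ℤ)+1-(k:ℤ)) - 2*(k:ℤ))
        * qint (2*((r:ℤ)+1-(k:ℤ))) / (qdfact k * qdfact (r+1-k)))
      = v^(-(2*((r:ℤ)+1))) * SA r := by
    rw [Finset.sum_range_succ]
    rw [show (2*((r:ℤ)+1-((r+1:ℕ):ℤ))) = 0 by push_cast; ring, qint_zero, mul_zero, zero_div,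
      add_zero]
    have step1 : ∀ k ∈ Finset.range (r+1),
        v ^ (-2*(k:ℤ)*((r:ℤ)+1-(k:ℤ)) - 2*((r:ℤ)+1-(k:ℤ)) - 2*(k:ℤ))
          * qint (2*((r:ℤ)+1-(k:ℤ))) / (qdfact k * qdfact (r+1-k))
        = v ^ (-2*(k:ℤ)*((r:ℤ)+1-(k:ℤ)) - 2*((r:ℤ)+1-(k:ℤ)) - 2*(k:ℤ))
            / (qdfact k * qdfact (r-k)) := by
      intro k hk
      have hk' : k ≤ r := by simpa [Nat.lt_succ_iff] using hk
      have h1 : r + 1 - k = (r - k) + 1 := by omega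
      rw [h1, qdfact_succ]
      rw [show (2*((r:ℤ)+1-(k:ℤ))) = 2*(((r-k:ℕ):ℤ)+1) by
        have : ((r-k:ℕ):ℤ) = (r:ℤ) - k := by omega
        rw [this]; ring]
      have hqne := qint_ne_zero (2*(((r-k:ℕ):ℤ)+1)) (by omega)
      rw [show qdfact k * (qdfact (r-k) * qint (2*(((r-k:ℕ):ℤ)+1)))
          = (qdfact k * qdfact (r-k)) * qint (2*(((r-k:ℕ):ℤ)+1)) by ring]
      exact mul_div_mul_right _ _ hqne
    rw [Finset.sum_congr rfl step1]
    rw [← Finset.sum_range_reflect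
      (fun k => v ^ (-2*(k:ℤ)*((r:ℤ)+1-(k:ℤ)) - 2*((r:ℤ)+1-(k:ℤ)) - 2*(k:ℤ))
            / (qdfact k * qdfact (r-k))) (r+1)]
    rw [SA, Finset.mul_sum]
    apply Finset.sum_congr rfl
    intro k hk
    have hk' : k ≤ r := by simpa [Nat.lt_succ_iff] using hk
    simp only [Nat.add_sub_cancel]
    have h1 : ((r - k : ℕ) : ℤ) = (r:ℤ) - k := by omega
    have h2 : r - (r - k) = k := by omega
    rw [h2, h1, sa]
    rw [show (-2*((r:ℤ)-(k:ℤ))*((r:ℤ)+1-((r:ℤ)-(k:ℤ))) - 2*((r:ℤ)+1-((r:ℤ)-(k:ℤ))) - 2*((r:ℤ)-(k:ℤ)))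
        = (-(2*((r:ℤ)+1))) + (-2*(k:ℤ)*((r:ℤ)-(k:ℤ)) - 2*((r:ℤ)-(k:ℤ))) by ring]
    rw [zpow_add₀ hv, mul_div_assoc, mul_comm (qdfact (r-k)) (qdfact k)]
  rw [hP, hQ]
  ring

def cc (n : ℕ) : ℕ := n * (n + 1) / 2

lemma two_cc (n : ℕ) : 2 * cc n = n * (n + 1) :=
  Nat.mul_div_cancel' (even_iff_two_dvd.mp (Nat.even_mul_succ_self n)) 

lemma cc_succ (n : ℕ) : cc (n + 1) = cc n + (n + 1) := by
  have h1 := two_cc n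
  have h2 := two_cc (n + 1)
  have h3 : (n+1) * (n+1+1) = n * (n+1) + 2*n + 2 := by ring
  omega

lemma SA_eq (r : ℕ) : SA r = v ^ (-(cc r : ℤ)) / qfact r := by
  induction r with
  | zero => simp [SA, sa, qfact, qdfact, cc]
  | succ r ih =>
    have hne := qint_ne_zero (2*((r:ℤ)+1)) (by omega)
    apply mul_left_cancel₀ hne
    rw [SA_rec, ih]
    have hplus : v ^ ((r:ℤ)+1) + v ^ (-((r:ℤ)+1)) ≠ 0 := by
      intro h
      apply hne
      rw [qdouble, h, zero_mul]
    have hfs := qfact_ne_zero r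
    have hfi := qint_ne_zero ((r:ℤ)+1) (by omega)
    rw [qdouble, qfact_succ]
    rw [show (-(cc (r+1) : ℤ)) = (-((r:ℤ)+1)) + (-(cc r : ℤ)) by
      rw [cc_succ]; push_cast; ring]
    rw [show (-(2*((r:ℤ)+1))) = (-((r:ℤ)+1)) + (-((r:ℤ)+1)) by ring]
    rw [zpow_add₀ hv (-((r:ℤ)+1)) (-(cc r : ℤ)), zpow_add₀ hv (-((r:ℤ)+1)) (-((r:ℤ)+1))]
    rw [show (1:K) + v ^ (-((r:ℤ)+1)) * v ^ (-((r:ℤ)+1))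
        = (v ^ ((r:ℤ)+1) + v ^ (-((r:ℤ)+1))) * v ^ (-((r:ℤ)+1)) by
      have h : v ^ ((r:ℤ)+1) * v ^ (-((r:ℤ)+1)) = 1 := by
        rw [← zpow_add₀ hv, add_neg_cancel, zpow_zero]
      linear_combination -h]
    field_simp

def pb (ε : K) (t N n : ℕ) : K :=
  ε ^ n * v ^ ((n:ℤ)*((N:ℤ)+1+2*(t:ℤ))) / (qfact n * qfact (N-n))

def PB (ε : K) (t N : ℕ) : K := ∑ n ∈ Finset.range (N+1), pb ε t N n

lemma PB_rec (ε : K) (t N : ℕ) :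
    qint ((N:ℤ)+1) * PB ε t (N+1)
    = (1 + ε * v ^ (2*((t:ℤ)+(N:ℤ)+1))) * PB ε t N := by
  have hsplit : ∀ n ∈ Finset.range (N+2),
      qint ((N:ℤ)+1) * pb ε t (N+1) n
      = (ε ^ n * v ^ ((n:ℤ)*((N:ℤ)+2+2*(t:ℤ)) + ((N:ℤ)+1-(n:ℤ))) * qint (n:ℤ)
          / (qfact n * qfact (N+1-n)))
        + (ε ^ n * v ^ ((n:ℤ)*((N:ℤ)+2+2*(t:ℤ)) - (n:ℤ)) * qint ((N:ℤ)+1-(n:ℤ))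
          / (qfact n * qfact (N+1-n))) := by
    intro n hn
    have hq : qint ((N:ℤ)+1) = v ^ ((N:ℤ)+1-(n:ℤ)) * qint (n:ℤ)
        + v ^ (-(n:ℤ)) * qint ((N:ℤ)+1-(n:ℤ)) := by
      have := qadd (n:ℤ) ((N:ℤ)+1-(n:ℤ))
      rw [show (n:ℤ) + ((N:ℤ)+1-(n:ℤ)) = (N:ℤ)+1 by ring] at this
      exact this
    rw [hq, pb]
    rw [show ((n:ℤ)*(((N+1:ℕ):ℤ)+1+2*(t:ℤ))) = (n:ℤ)*((N:ℤ)+2+2*(t:ℤ)) by push_cast; ring]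
    rw [show ((n:ℤ)*((N:ℤ)+2+2*(t:ℤ)) + ((N:ℤ)+1-(n:ℤ)))
        = (n:ℤ)*((N:ℤ)+2+2*(t:ℤ)) + ((N:ℤ)+1-(n:ℤ)) from rfl]
    rw [zpow_add₀ hv ((n:ℤ)*((N:ℤ)+2+2*(t:ℤ))) ((N:ℤ)+1-(n:ℤ)),
      show ((n:ℤ)*((N:ℤ)+2+2*(t:ℤ)) - (n:ℤ)) = (n:ℤ)*((N:ℤ)+2+2*(t:ℤ)) + (-(n:ℤ)) by ring,
      zpow_add₀ hv ((n:ℤ)*((N:ℤ)+2+2*(t:ℤ))) (-(n:ℤ))]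
    ring
  rw [PB, Finset.mul_sum, Finset.sum_congr rfl hsplit, Finset.sum_add_distrib]
  have hP : (∑ n ∈ Finset.range (N+2),
      ε ^ n * v ^ ((n:ℤ)*((N:ℤ)+2+2*(t:ℤ)) + ((N:ℤ)+1-(n:ℤ))) * qint (n:ℤ)
        / (qfact n * qfact (N+1-n)))
      = ε * v ^ (2*((t:ℤ)+(N:ℤ)+1)) * PB ε t N := by
    rw [Finset.sum_range_succ']
    simp only [Nat.cast_zero, qint_zero, mul_zero, zero_div, add_zero]
    rw [PB, Finset.mul_sum]
    apply Finset.sum_congr rfl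
    intro n hn
    have hn' : n ≤ N := by simpa [Nat.lt_succ_iff] using hn
    have h1 : N + 1 - (n+1) = N - n := by omega
    have h2 : qfact (n+1) = qfact n * qint ((n:ℤ)+1) := qfact_succ n
    have hqne := qint_ne_zero ((n:ℤ)+1) (by omega)
    have hfs := qfact_ne_zero n
    have hfs2 := qfact_ne_zero (N-n)
    rw [h1, h2, pb]
    rw [show ((n+1:ℕ):ℤ) = (n:ℤ)+1 by push_cast; ring]
    rw [show (((n:ℤ)+1)*((N:ℤ)+2+2*(t:ℤ)) + ((N:ℤ)+1-((n:ℤ)+1)))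
        = 2*((t:ℤ)+(N:ℤ)+1) + ((n:ℤ)*((N:ℤ)+1+2*(t:ℤ))) by ring]
    rw [zpow_add₀ hv (2*((t:ℤ)+(N:ℤ)+1)) ((n:ℤ)*((N:ℤ)+1+2*(t:ℤ)))]
    rw [show qfact n * qint ((n:ℤ)+1) * qfact (N-n)
        = (qfact n * qfact (N-n)) * qint ((n:ℤ)+1) by ring]
    rw [show ε ^ (n+1) * (v ^ (2*((t:ℤ)+(N:ℤ)+1)) * v ^ ((n:ℤ)*((N:ℤ)+1+2*(t:ℤ)))) * qint ((n:ℤ)+1)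
        = (ε * v ^ (2*((t:ℤ)+(N:ℤ)+1)) * (ε ^ n * v ^ ((n:ℤ)*((N:ℤ)+1+2*(t:ℤ))))) * qint ((n:ℤ)+1) by ring]
    rw [mul_div_mul_right _ _ hqne, mul_div_assoc]
  have hQ : (∑ n ∈ Finset.range (N+2),
      ε ^ n * v ^ ((n:ℤ)*((N:ℤ)+2+2*(t:ℤ)) - (n:ℤ)) * qint ((N:ℤ)+1-(n:ℤ))
        / (qfact n * qfact (N+1-n)))
      = PB ε t N := by
    rw [Finset.sum_range_succ]
    rw [show ((N:ℤ)+1-((N+1:ℕ):ℤ)) = 0 by push_cast; ring, qint_zero, mul_zero, zero_div,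
      add_zero]
    rw [PB]
    apply Finset.sum_congr rfl
    intro n hn
    have hn' : n ≤ N := by simpa [Nat.lt_succ_iff] using hn
    have h1 : N + 1 - n = (N - n) + 1 := by omega
    rw [h1, qfact_succ, pb]
    rw [show ((N:ℤ)+1-(n:ℤ)) = ((N-n:ℕ):ℤ)+1 by
      have : ((N-n:ℕ):ℤ) = (N:ℤ) - n := by omega
      rw [this]; ring]
    have hqne := qint_ne_zero (((N-n:ℕ):ℤ)+1) (by omega)
    rw [show ((n:ℤ)*((N:ℤ)+2+2*(t:ℤ)) - (n:ℤ)) = (n:ℤ)*((N:ℤ)+1+2*(t:ℤ)) by ring]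
    rw [show qfact n * (qfact (N-n) * qint (((N-n:ℕ):ℤ)+1))
        = (qfact n * qfact (N-n)) * qint (((N-n:ℕ):ℤ)+1) by ring]
    exact mul_div_mul_right _ _ hqne
  rw [hP, hQ]
  ring

lemma PB_eq (ε : K) (t N : ℕ) :
    PB ε t N = v ^ ((cc N : ℤ) + (N:ℤ)*(t:ℤ))
      * (∏ j ∈ Finset.Icc (t+1) (t+N), (v ^ (-(j:ℤ)) + ε * v ^ (j:ℤ))) / qfact N := by
  induction N with
  | zero =>
    rw [show t + 0 = t from rfl, Finset.Icc_eq_empty (by omega), Finset.prod_empty]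
    simp [PB, pb, qfact, cc]
  | succ N ih =>
    have hne := qint_ne_zero ((N:ℤ)+1) (by omega)
    apply mul_left_cancel₀ hne
    rw [PB_rec, ih]
    rw [show t + (N+1) = (t+N)+1 from rfl]
    rw [Finset.prod_Icc_succ_top (by omega)]
    rw [qfact_succ]
    rw [show ((cc (N+1) : ℤ) + ((N+1:ℕ):ℤ)*(t:ℤ))
        = ((cc N : ℤ) + (N:ℤ)*(t:ℤ)) + ((t:ℤ)+(N:ℤ)+1) by
      rw [cc_succ]; push_cast; ring]
    rw [zpow_add₀ hv ((cc N : ℤ) + (N:ℤ)*(t:ℤ)) ((t:ℤ)+(N:ℤ)+1)]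
    rw [show (((t+N)+1:ℕ):ℤ) = (t:ℤ)+(N:ℤ)+1 by push_cast; ring]
    rw [show (1 + ε * v ^ (2*((t:ℤ)+(N:ℤ)+1)))
        = v ^ ((t:ℤ)+(N:ℤ)+1) * (v ^ (-((t:ℤ)+(N:ℤ)+1)) + ε * v ^ ((t:ℤ)+(N:ℤ)+1)) by
      have h1 : v ^ ((t:ℤ)+(N:ℤ)+1) * v ^ (-((t:ℤ)+(N:ℤ)+1)) = 1 := by
        rw [← zpow_add₀ hv, add_neg_cancel, zpow_zero]
      have h2 : v ^ ((t:ℤ)+(N:ℤ)+1) * v ^ ((t:ℤ)+(N:ℤ)+1) = v ^ (2*((t:ℤ)+(N:ℤ)+1)) := by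
        rw [← zpow_add₀ hv]; ring_nf
      linear_combination -h1 - ε * h2]
    have hfs := qfact_ne_zero N
    have hfi := qint_ne_zero ((N:ℤ)+1) (by omega)
    field_simp

lemma triangle (N : ℕ) (f : ℕ → ℕ → K) :
    ∑ k ∈ Finset.range (N+1), ∑ m ∈ Finset.range (N+1-k), f k m
    = ∑ r ∈ Finset.range (N+1), ∑ k ∈ Finset.range (r+1), f k (r-k) := by
  rw [Finset.sum_sigma', Finset.sum_sigma']
  apply Finset.sum_nbij' (fun p => (⟨p.1 + p.2, p.1⟩ : Σ _ : ℕ, ℕ))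
    (fun p => (⟨p.2, p.1 - p.2⟩ : Σ _ : ℕ, ℕ))
  · intro a ha
    simp only [Finset.mem_sigma, Finset.mem_range] at ha ⊢
    omega
  · intro a ha
    simp only [Finset.mem_sigma, Finset.mem_range] at ha ⊢
    omega
  · intro a ha
    simp only [Finset.mem_sigma, Finset.mem_range] at ha
    ext <;> simp <;> omega
  · intro a ha
    simp only [Finset.mem_sigma, Finset.mem_range] at ha
    ext <;> simp <;> omega
  · intro a ha
    simp only [Finset.mem_sigma, Finset.mem_range] at ha
    simp only []
    rw [show a.1 + a.2 - a.1 = a.2 by omega]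

theorem stmt17 (d t : ℕ) (hd : 1 ≤ d) (ht : t ≤ d) (ε : K) (hε : ε = 1 ∨ ε = -1) :
    ∑ k ∈ Finset.range (d - t + 1), ∑ m ∈ Finset.range (d - t + 1 - k),
      ε ^ (d - t - k - m) *
        v ^ ((t : ℤ) ^ 2 - 2 * (d : ℤ) * t + (t : ℤ)
              + 2 * ((d - t - k - m : ℕ) : ℤ) * t
              + (((d - t - k - m) * (d - t - k - m + 1) / 2 : ℕ) : ℤ)
              - 2 * (k : ℤ) * m - 2 * (m : ℤ)) /
        (qfact (d - t - k - m) * qdfact k * qdfact m)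
    = v ^ ((1 - (d : ℤ)) * t) / qfact (d - t) *
        ∏ j ∈ Finset.Icc (t + 1) d, (v ^ (-(j : ℤ)) + ε * v ^ (j : ℤ)) := by
  obtain ⟨N, hN⟩ : ∃ N, d - t = N := ⟨d - t, rfl⟩
  have hdN : d = t + N := by omega
  rw [hN]
  set C : ℤ := (t : ℤ) ^ 2 - 2 * (d : ℤ) * t + (t : ℤ) with hC
  rw [triangle N (fun k m =>
      ε ^ (N - k - m) *
        v ^ (C + 2 * ((N - k - m : ℕ) : ℤ) * t
              + (((N - k - m) * (N - k - m + 1) / 2 : ℕ) : ℤ)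
              - 2 * (k : ℤ) * m - 2 * (m : ℤ)) /
        (qfact (N - k - m) * qdfact k * qdfact m))]
  have h2 : ∀ r ∈ Finset.range (N+1),
      (∑ k ∈ Finset.range (r+1),
        ε ^ (N - k - (r-k)) *
          v ^ (C + 2 * ((N - k - (r-k) : ℕ) : ℤ) * t
                + (((N - k - (r-k)) * (N - k - (r-k) + 1) / 2 : ℕ) : ℤ)
                - 2 * (k : ℤ) * ((r-k : ℕ) : ℤ) - 2 * ((r-k : ℕ) : ℤ)) /
          (qfact (N - k - (r-k)) * qdfact k * qdfact (r-k)))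
      = (ε ^ (N - r) * v ^ (C + 2 * ((N - r : ℕ) : ℤ) * t + ((cc (N-r) : ℕ) : ℤ))
          / qfact (N - r)) * (v ^ (-(cc r : ℤ)) / qfact r) := by
    intro r hr
    have hr' : r ≤ N := by simpa [Nat.lt_succ_iff] using hr
    rw [← SA_eq, SA, Finset.mul_sum]
    apply Finset.sum_congr rfl
    intro k hk
    have hk' : k ≤ r := by simpa [Nat.lt_succ_iff] using hk
    have e1 : N - k - (r - k) = N - r := by omega
    rw [e1]
    rw [show (N-r) * ((N-r) + 1) / 2 = cc (N-r) from rfl]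
    have e2 : ((r - k : ℕ) : ℤ) = (r:ℤ) - (k:ℤ) := by omega
    rw [e2]
    rw [show (C + 2 * ((N - r : ℕ) : ℤ) * t + ((cc (N-r) : ℕ) : ℤ)
          - 2 * (k : ℤ) * ((r:ℤ) - (k:ℤ)) - 2 * ((r:ℤ) - (k:ℤ)))
        = (C + 2 * ((N - r : ℕ) : ℤ) * t + ((cc (N-r) : ℕ) : ℤ))
          + (-2*(k:ℤ)*((r:ℤ)-(k:ℤ)) - 2*((r:ℤ)-(k:ℤ))) by ring]
    rw [zpow_add₀ hv, sa, div_mul_div_comm]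
    congr 1
    · ring
    · ring
  rw [Finset.sum_congr rfl h2]
  rw [← Finset.sum_range_reflect (fun r =>
      (ε ^ (N - r) * v ^ (C + 2 * ((N - r : ℕ) : ℤ) * t + ((cc (N-r) : ℕ) : ℤ))
          / qfact (N - r)) * (v ^ (-(cc r : ℤ)) / qfact r)) (N+1)]
  simp only [Nat.add_sub_cancel]
  have h3 : ∀ j ∈ Finset.range (N+1),
      (ε ^ (N - (N-j)) * v ^ (C + 2 * ((N - (N-j) : ℕ) : ℤ) * t + ((cc (N-(N-j)) : ℕ) : ℤ))
          / qfact (N - (N-j))) * (v ^ (-(cc (N-j) : ℤ)) / qfact (N-j))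
      = v ^ (C - (cc N : ℤ)) * pb ε t N j := by
    intro j hj
    have hj' : j ≤ N := by simpa [Nat.lt_succ_iff] using hj
    rw [show N - (N - j) = j by omega, pb]
    rw [div_mul_div_comm, ← mul_div_assoc]
    congr 1
    have c1 : 2 * (cc j : ℤ) = (j:ℤ)*((j:ℤ)+1) := by
      have := two_cc j; exact_mod_cast congrArg (Nat.cast : ℕ → ℤ) this
    have c2 : 2 * (cc (N-j) : ℤ) = ((N:ℤ)-(j:ℤ))*(((N:ℤ)-(j:ℤ))+1) := by
      have h := two_cc (N-j)
      have hcast : ((N-j:ℕ):ℤ) = (N:ℤ) - (j:ℤ) := by omega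
      have := congrArg (Nat.cast : ℕ → ℤ) h
      push_cast at this
      rw [hcast] at this
      linarith [this]
    have c3 : 2 * (cc N : ℤ) = (N:ℤ)*((N:ℤ)+1) := by
      have := two_cc N; exact_mod_cast congrArg (Nat.cast : ℕ → ℤ) this
    rw [mul_assoc, ← zpow_add₀ hv]
    rw [show (C + 2 * ((j:ℕ) : ℤ) * t + ((cc j : ℕ) : ℤ)) + (-(cc (N-j) : ℤ))
        = (C - (cc N : ℤ)) + ((j:ℤ)*((N:ℤ)+1+2*(t:ℤ))) by linarith [c1, c2, c3]]
    rw [zpow_add₀ hv]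
    ring
  rw [Finset.sum_congr rfl h3, ← Finset.mul_sum, ← PB, PB_eq]
  rw [show t + N = d by omega]
  rw [← mul_div_assoc, ← mul_assoc, ← zpow_add₀ hv]
  rw [show (C - (cc N : ℤ)) + ((cc N : ℤ) + (N:ℤ)*(t:ℤ)) = (1 - (d:ℤ)) * t by
    have hNd : (N:ℤ) = (d:ℤ) - (t:ℤ) := by omega
    rw [hC, hNd]; ring]
  rw [div_mul_eq_mul_div]
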